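/- Let H be a finite set, k a nonnegative integer, p a prime, and G = ℤ/p^{α_1}ℤ ⊕ ... ⊕ ℤ/p^{α_r}ℤ a finite abelian p-group. For a function φ from the set P_k(H) of subsets of H of size at most k to G, define φ̄(U) = Σ_{X ⊆ U, |X| ≤ k} φ(X) for U ⊆ H. Then there exists a subset U ⊆ H with |U| ≤ k·Σ_{j=1}^r (p^{α_j} - 1) such that φ̄(U) = φ̄(H). -/

import Mathlib

set_option linter.unusedSectionVars false
set_option linter.unusedVariables false
set_option maxHeartbeats 1000000

open Finset

namespace AdditiveMainAux

variable {H : Type*} [Fintype H] [DecidableEq H] {R : Type*} [CommRing R]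

variable {H : Type*} [Fintype H] [DecidableEq H] {R : Type*} [CommRing R]

/-- `g` is given on the Boolean cube by a multilinear expansion of degree ≤ `D`. -/
def DegLE (g : Finset H → R) (D : ℕ) : Prop :=
  ∃ c : Finset H → R, (∀ T : Finset H, D < T.card → c T = 0) ∧
    ∀ U : Finset H, g U = ∑ T ∈ U.powerset, c T

lemma DegLE.mono {g : Finset H → R} {D D' : ℕ} (h : DegLE g D) (hD : D ≤ D') : DegLE g D' := by
  obtain ⟨c, h1, h2⟩ := h
  exact ⟨c, fun T hT => h1 T (lt_of_le_of_lt hD hT), h2⟩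

lemma degLE_const (r : R) : DegLE (fun _ : Finset H => r) 0 := by
  refine ⟨fun T => if T = ∅ then r else 0, ?_, ?_⟩
  · intro T hT; dsimp only; rw [if_neg]; rintro rfl; simp at hT
  · intro U; simp

lemma degLE_monomial (W : Finset H) (r : R) :
    DegLE (fun U : Finset H => if W ⊆ U then r else 0) W.card := by
  refine ⟨fun T => if T = W then r else 0, ?_, ?_⟩
  · intro T hT; dsimp only; rw [if_neg]; rintro rfl; exact lt_irrefl _ hT
  · intro U
    dsimp only
    rw [Finset.sum_ite_eq' U.powerset W (fun _ => r)]
    simp only [mem_powerset]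

lemma DegLE.add {g h : Finset H → R} {D : ℕ} (hg : DegLE g D) (hh : DegLE h D) :
    DegLE (fun U => g U + h U) D := by
  obtain ⟨c, hc1, hc2⟩ := hg; obtain ⟨d, hd1, hd2⟩ := hh
  exact ⟨fun T => c T + d T, fun T hT => by dsimp only; rw [hc1 T hT, hd1 T hT, add_zero],
    fun U => by dsimp only; rw [hc2, hd2, Finset.sum_add_distrib]⟩

lemma DegLE.neg {g : Finset H → R} {D : ℕ} (hg : DegLE g D) :
    DegLE (fun U => - g U) D := by
  obtain ⟨c, hc1, hc2⟩ := hg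
  exact ⟨fun T => - c T, fun T hT => by dsimp only; rw [hc1 T hT, neg_zero],
    fun U => by dsimp only; rw [hc2, Finset.sum_neg_distrib]⟩

lemma DegLE.sub {g h : Finset H → R} {D : ℕ} (hg : DegLE g D) (hh : DegLE h D) :
    DegLE (fun U => g U - h U) D := by
  have := hg.add hh.neg
  simpa [sub_eq_add_neg] using this

lemma degLE_sum {ι : Type*} (S : Finset ι) (g : ι → Finset H → R) (D : ℕ)
    (h : ∀ s ∈ S, DegLE (g s) D) : DegLE (fun U => ∑ s ∈ S, g s U) D := by
  classical
  induction S using Finset.induction_on with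
  | empty => simpa using (degLE_const (0 : R)).mono (Nat.zero_le D)
  | @insert a S ha ih =>
    simp only [Finset.sum_insert ha]
    exact (h a (mem_insert_self _ _)).add (ih fun s hs => h s (mem_insert_of_mem hs))

lemma DegLE.mul {g h : Finset H → R} {D E : ℕ} (hg : DegLE g D) (hh : DegLE h E) :
    DegLE (fun U => g U * h U) (D + E) := by
  obtain ⟨c, hc1, hc2⟩ := hg; obtain ⟨d, hd1, hd2⟩ := hh
  refine ⟨fun T => ∑ A ∈ T.powerset, ∑ B ∈ T.powerset,
    if A ∪ B = T then c A * d B else 0, ?_, ?_⟩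
  · intro T hT
    refine Finset.sum_eq_zero fun A hA => Finset.sum_eq_zero fun B hB => ?_
    rw [ite_eq_right_iff]
    intro hAB
    have hcard : T.card ≤ A.card + B.card := hAB ▸ Finset.card_union_le A B
    rcases Nat.lt_or_ge D A.card with hc | hc
    · rw [hc1 A hc, zero_mul]
    · rw [hd1 B (by omega), mul_zero]
  · intro U
    dsimp only
    rw [hc2, hd2, Finset.sum_mul_sum]
    rw [eq_comm]
    have step1 : ∀ T ∈ U.powerset,
        (∑ A ∈ T.powerset, ∑ B ∈ T.powerset, if A ∪ B = T then c A * d B else 0)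
          = ∑ A ∈ U.powerset, ∑ B ∈ U.powerset, if A ∪ B = T then c A * d B else 0 := by
      intro T hT
      have hTU : T.powerset ⊆ U.powerset := Finset.powerset_mono.2 (mem_powerset.1 hT)
      rw [Finset.sum_subset hTU]
      · refine Finset.sum_congr rfl fun A hA => ?_
        rw [Finset.sum_subset hTU]
        intro B _ hB
        rw [ite_eq_right_iff]; intro hAB
        exact absurd (mem_powerset.2 (hAB ▸ Finset.subset_union_right)) hB
      · intro A _ hA
        refine Finset.sum_eq_zero fun B _ => ?_
        rw [ite_eq_right_iff]; intro hAB
        exact absurd (mem_powerset.2 (hAB ▸ Finset.subset_union_left)) hA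
    rw [Finset.sum_congr rfl step1, Finset.sum_comm]
    refine Finset.sum_congr rfl fun A hA => ?_
    rw [Finset.sum_comm]
    refine Finset.sum_congr rfl fun B hB => ?_
    rw [Finset.sum_ite_eq U.powerset (A ∪ B) (fun _ => c A * d B), if_pos]
    exact mem_powerset.2 (Finset.union_subset (mem_powerset.1 hA) (mem_powerset.1 hB))

lemma degLE_prod {ι : Type*} (S : Finset ι) (g : ι → Finset H → R) (D : ι → ℕ)
    (h : ∀ s ∈ S, DegLE (g s) (D s)) :
    DegLE (fun U => ∏ s ∈ S, g s U) (∑ s ∈ S, D s) := by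
  classical
  induction S using Finset.induction_on with
  | empty => simpa using degLE_const (1 : R)
  | @insert a S ha ih =>
    simp only [Finset.prod_insert ha, Finset.sum_insert ha]
    exact (h a (mem_insert_self _ _)).mul (ih fun s hs => h s (mem_insert_of_mem hs))

lemma DegLE.pow {g : Finset H → R} {D : ℕ} (hg : DegLE g D) (m : ℕ) :
    DegLE (fun U => g U ^ m) (m * D) := by
  induction m with
  | zero => simpa using degLE_const (1 : R)
  | succ m ih =>
    simp only [pow_succ, Nat.succ_mul]
    exact ih.mul hg

lemma DegLE.exists_small {g : Finset H → R} {D : ℕ} (hg : DegLE g D)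
    (hne : g Finset.univ ≠ 0) : ∃ U : Finset H, U.card ≤ D ∧ g U ≠ 0 := by
  by_contra hcon
  push_neg at hcon
  obtain ⟨c, hc1, hc2⟩ := hg
  have key : ∀ n : ℕ, ∀ T : Finset H, T.card ≤ n → T.card ≤ D → c T = 0 := by
    intro n
    induction n with
    | zero =>
      intro T h0 hD
      have hTe : T = ∅ := Finset.card_eq_zero.1 (Nat.le_zero.1 h0)
      subst hTe
      have h := hc2 ∅
      rw [hcon ∅ hD] at h
      simpa using h.symm
    | succ n ih =>
      intro T hTn hTD
      have h := hc2 T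
      rw [hcon T hTD, ← Finset.add_sum_erase _ _ (Finset.mem_powerset_self T)] at h
      have hz : ∀ S ∈ T.powerset.erase T, c S = 0 := by
        intro S hS
        obtain ⟨hne', hsub⟩ := Finset.mem_erase.1 hS
        have hlt : S.card < T.card :=
          Finset.card_lt_card (lt_of_le_of_ne (mem_powerset.1 hsub) hne')
        exact ih S (by omega) (by omega)
      rw [Finset.sum_eq_zero hz, add_zero] at h
      exact h.symm
  apply hne
  rw [hc2]
  refine Finset.sum_eq_zero fun T _ => ?_
  rcases le_or_gt T.card D with h | h
  · exact key T.card T le_rfl h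
  · exact hc1 T h


/-- Degree bound for the mod-`p` binomial coefficient of a degree-`k'` counting function. -/
lemma degLE_choose (p k' m : ℕ) (ψ : Finset H → ℕ)
    (hψ : ∀ T, ψ T ≠ 0 → T.card ≤ k') :
    DegLE (fun U : Finset H =>
      ((Nat.choose (∑ T ∈ U.powerset, ψ T) m : ℕ) : ZMod p)) (k' * m) := by
  classical
  set A : Finset H → Finset (Σ _ : Finset H, ℕ) :=
    fun U => U.powerset.sigma fun T => Finset.range (ψ T) with hA
  have hcard : ∀ U : Finset H, (A U).card = ∑ T ∈ U.powerset, ψ T := by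
    intro U; rw [hA]; simp [Finset.card_sigma]
  have hmono : ∀ U : Finset H, A U ⊆ A Finset.univ := by
    intro U x hx
    rw [hA, Finset.mem_sigma] at hx ⊢
    exact ⟨by simp, hx.2⟩
  have hiff : ∀ S : Finset (Σ _ : Finset H, ℕ), S ∈ (A Finset.univ).powersetCard m →
      ∀ U : Finset H, (S ⊆ A U ↔ S.biUnion (fun x => x.1) ⊆ U) := by
    intro S hS U
    rw [Finset.mem_powersetCard] at hS
    constructor
    · intro h
      rw [Finset.biUnion_subset]
      intro x hx
      have := h hx
      rw [hA, Finset.mem_sigma, Finset.mem_powerset] at this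
      exact this.1
    · intro h x hx
      have h1 := hS.1 hx
      rw [hA, Finset.mem_sigma] at h1 ⊢
      refine ⟨Finset.mem_powerset.2 ?_, h1.2⟩
      exact (Finset.subset_biUnion_of_mem (fun x => x.1) hx).trans h
  have hchoose : ∀ U : Finset H, Nat.choose (∑ T ∈ U.powerset, ψ T) m
      = ∑ S ∈ (A Finset.univ).powersetCard m,
          (if S.biUnion (fun x => x.1) ⊆ U then 1 else 0) := by
    intro U
    rw [← hcard, ← Finset.card_powersetCard]
    have : (A U).powersetCard m
        = ((A Finset.univ).powersetCard m).filter (fun S => S ⊆ A U) := by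
      ext S
      simp only [Finset.mem_powersetCard, Finset.mem_filter]
      constructor
      · intro h
        exact ⟨⟨h.1.trans (hmono U), h.2⟩, h.1⟩
      · intro h
        exact ⟨h.2, h.1.2⟩
    rw [this, Finset.card_filter]
    refine Finset.sum_congr rfl fun S hS => ?_
    exact if_congr (hiff S hS U) rfl rfl
  have heq : (fun U : Finset H => ((Nat.choose (∑ T ∈ U.powerset, ψ T) m : ℕ) : ZMod p))
      = fun U => ∑ S ∈ (A Finset.univ).powersetCard m,
          (if S.biUnion (fun x => x.1) ⊆ U then (1 : ZMod p) else 0) := by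
    funext U
    rw [hchoose U]
    push_cast
    refine Finset.sum_congr rfl fun S _ => ?_
    split_ifs <;> simp
  rw [heq]
  refine degLE_sum _ _ _ fun S hS => ?_
  refine (degLE_monomial _ _).mono ?_
  calc (S.biUnion (fun x => x.1)).card ≤ ∑ x ∈ S, x.1.card := Finset.card_biUnion_le
    _ ≤ ∑ _x ∈ S, k' := by
        refine Finset.sum_le_sum fun x hx => ?_
        have h1 := (Finset.mem_powersetCard.1 hS).1 hx
        rw [hA, Finset.mem_sigma, Finset.mem_range] at h1
        exact hψ x.1 (by omega)
    _ = S.card * k' := by rw [Finset.sum_const, smul_eq_mul]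
    _ = k' * m := by rw [(Finset.mem_powersetCard.1 hS).2, mul_comm]

lemma choose_pow_modEq (p : ℕ) (hp : p.Prime) (i : ℕ) : ∀ n : ℕ,
    Nat.choose n (p ^ i) ≡ n / p ^ i [MOD p] := by
  haveI : Fact p.Prime := ⟨hp⟩
  induction i with
  | zero => intro n; simpa using Nat.ModEq.refl _
  | succ i ih =>
    intro n
    have h := Choose.choose_modEq_choose_mod_mul_choose_div_nat (n := n) (k := p ^ (i + 1)) (p := p)
    have e1 : p ^ (i + 1) % p = 0 := by rw [pow_succ]; exact Nat.mul_mod_left _ _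
    have e2 : p ^ (i + 1) / p = p ^ i := by rw [pow_succ]; exact Nat.mul_div_cancel _ hp.pos
    rw [e1, e2, Nat.choose_zero_right, one_mul] at h
    have h2 := ih (n / p)
    rw [Nat.div_div_eq_div_mul, ← pow_succ'] at h2
    exact h.trans h2

lemma modEq_pow_of_div (p : ℕ) (α : ℕ) : ∀ a b : ℕ,
    (∀ i < α, a / p ^ i ≡ b / p ^ i [MOD p]) → a ≡ b [MOD p ^ α] := by
  induction α with
  | zero => intro a b _; simp [Nat.ModEq, Nat.mod_one]
  | succ α ih =>
    intro a b h
    have h0 : a % p = b % p := by simpa [Nat.ModEq] using h 0 (by omega)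
    have hdiv : a / p ≡ b / p [MOD p ^ α] := by
      apply ih
      intro i hi
      have h2 := h (i + 1) (by omega)
      rw [pow_succ] at h2
      simp only [Nat.div_div_eq_div_mul]
      rwa [Nat.mul_comm p (p ^ i)]
    have hm := Nat.ModEq.mul_left' (c := p) hdiv
    have ha := Nat.div_add_mod a p
    have hb := Nat.div_add_mod b p
    calc a = p * (a / p) + a % p := ha.symm
      _ ≡ p * (b / p) + b % p [MOD p ^ (α + 1)] := by
          rw [pow_succ', h0]
          exact Nat.ModEq.add_right _ hm
      _ = b := hb

lemma geom_nat (p α : ℕ) (hp : 1 ≤ p) :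
    (p - 1) * ∑ i ∈ Finset.range α, p ^ i = p ^ α - 1 := by
  have h1 : 1 ≤ p ^ α := Nat.one_le_pow _ _ hp
  zify [hp, h1]
  rw [mul_comm]
  exact geom_sum_mul _ _


end AdditiveMainAux

open AdditiveMainAux


/-- Main additive-combinatorics theorem: for `φ : P_k(H) → ℤ/p^{α₁}ℤ ⊕ ⋯ ⊕ ℤ/p^{α_r}ℤ`
there is `U ⊆ H` with `|U| ≤ k·∑ (p^{αⱼ}-1)` and `φ̄(U) = φ̄(H)`, where
`φ̄(U) = ∑_{X ⊆ U, |X| ≤ k} φ(X)`. -/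
theorem additive_main {H : Type*} [Fintype H] [DecidableEq H]
    (k p : ℕ) (hp : p.Prime) (r : ℕ) (α : Fin r → ℕ) (hα : ∀ j, 0 < α j)
    (φ : Finset H → (∀ j, ZMod (p ^ α j))) :
    ∃ U : Finset H, U.card ≤ k * ∑ j, (p ^ α j - 1) ∧
      ∑ X ∈ U.powerset.filter (fun X => X.card ≤ k), φ X
        = ∑ X ∈ (Finset.univ : Finset H).powerset.filter (fun X => X.card ≤ k), φ X := by
  classical
  haveI : Fact p.Prime := ⟨hp⟩
  set ψ : Fin r → Finset H → ℕ :=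
    fun j T => if T.card ≤ k then (φ T j).val else 0 with hψdef
  set N : Fin r → Finset H → ℕ := fun j U => ∑ T ∈ U.powerset, ψ j T with hNdef
  have hψk : ∀ j T, ψ j T ≠ 0 → T.card ≤ k := by
    intro j T h
    by_contra hk
    exact h (by simp [hψdef, hk])
  -- relation with φ̄
  have hNφ : ∀ (U : Finset H) (j : Fin r),
      ((N j U : ℕ) : ZMod (p ^ α j))
        = (∑ X ∈ U.powerset.filter (fun X => X.card ≤ k), φ X) j := by
    intro U j
    haveI : NeZero (p ^ α j) := ⟨pow_ne_zero _ hp.pos.ne'⟩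
    rw [Finset.sum_apply, Finset.sum_filter, hNdef]
    push_cast
    refine Finset.sum_congr rfl fun T hT => ?_
    rw [hψdef]
    by_cases h : T.card ≤ k
    · simp [h, ZMod.natCast_val, ZMod.cast_id]
    · simp [h]
  -- the indicator function
  set d : Fin r → ℕ → Finset H → ZMod p :=
    fun j i U => ((Nat.choose (N j U) (p ^ i) : ℕ) : ZMod p) with hddef
  set g : Finset H → ZMod p := fun U => ∏ j : Fin r, ∏ i ∈ Finset.range (α j),
    (1 - (d j i U - d j i Finset.univ) ^ (p - 1)) with hgdef
  have hdeg : DegLE g (k * ∑ j, (p ^ α j - 1)) := by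
    have hfac : ∀ (j : Fin r), ∀ i ∈ Finset.range (α j),
        DegLE (fun U => 1 - (d j i U - d j i Finset.univ) ^ (p - 1))
          ((p - 1) * (k * p ^ i)) := by
      intro j i _
      have h1 : DegLE (d j i) (k * p ^ i) := degLE_choose p k (p ^ i) (ψ j) (hψk j)
      have h2 : DegLE (fun U : Finset H => d j i U - d j i Finset.univ) (k * p ^ i) :=
        h1.sub ((degLE_const _).mono (Nat.zero_le _))
      have h3 := h2.pow (p - 1)
      have h4 : DegLE (fun _ : Finset H => (1 : ZMod p)) ((p - 1) * (k * p ^ i)) :=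
        (degLE_const _).mono (Nat.zero_le _)
      exact h4.sub h3
    have hinner : ∀ j : Fin r,
        DegLE (fun U => ∏ i ∈ Finset.range (α j),
          (1 - (d j i U - d j i Finset.univ) ^ (p - 1))) (k * (p ^ α j - 1)) := by
      intro j
      have := degLE_prod (Finset.range (α j)) _ _ (hfac j)
      refine this.mono (le_of_eq ?_)
      calc ∑ i ∈ Finset.range (α j), (p - 1) * (k * p ^ i)
          = k * ((p - 1) * ∑ i ∈ Finset.range (α j), p ^ i) := by
            rw [Finset.mul_sum, Finset.mul_sum]
            refine Finset.sum_congr rfl fun i _ => ?_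
            ring
        _ = k * (p ^ α j - 1) := by rw [geom_nat p (α j) hp.one_le]
    have := degLE_prod (Finset.univ : Finset (Fin r)) _ _ (fun j _ => hinner j)
    refine this.mono (le_of_eq ?_)
    rw [Finset.mul_sum]
  have hg1 : g Finset.univ = 1 := by
    rw [hgdef]
    have hpne : p - 1 ≠ 0 := by have := hp.two_le; omega
    simp [zero_pow hpne]
  obtain ⟨U, hUcard, hUne⟩ := hdeg.exists_small (by rw [hg1]; exact one_ne_zero)
  refine ⟨U, hUcard, ?_⟩
  funext j
  rw [← hNφ U j, ← hNφ Finset.univ j, ZMod.natCast_eq_natCast_iff]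
  apply modEq_pow_of_div p (α j)
  intro i hi
  -- extract factor
  have hfactor : (1 : ZMod p) - (d j i U - d j i Finset.univ) ^ (p - 1) ≠ 0 := by
    intro h0
    apply hUne
    rw [hgdef]
    refine Finset.prod_eq_zero (Finset.mem_univ j) ?_
    exact Finset.prod_eq_zero (Finset.mem_range.2 hi) h0
  have hdd : d j i U = d j i Finset.univ := by
    by_contra hne
    have : d j i U - d j i Finset.univ ≠ 0 := sub_ne_zero.2 hne
    rw [ZMod.pow_card_sub_one_eq_one this, sub_self] at hfactor
    exact hfactor rfl
  have hcong : Nat.choose (N j U) (p ^ i) ≡ Nat.choose (N j Finset.univ) (p ^ i) [MOD p] := by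
    rw [← ZMod.natCast_eq_natCast_iff]
    exact hdd
  exact ((choose_pow_modEq p hp i (N j U)).symm.trans hcong).trans
    (choose_pow_modEq p hp i (N j Finset.univ))
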